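/- The definitive-prefix operator distributes over arbitrary intersections: for any indexed family of trace sets (X_i)_{i∈I}, ↯(⋂_{i∈I} X_i) = ⋂_{i∈I} ↯X_i. -/

import Mathlib

/-- A trace is a finite list of states or an infinite stream of states. -/
def Trace (σ : Type) := List σ ⊕ (ℕ → σ)

namespace Trace

variable {σ : Type}

/-- Concatenation of traces; if the first is infinite, the result is the first. -/
def app : Trace σ → Trace σ → Trace σ
  | Sum.inl l, Sum.inl l' => Sum.inl (l ++ l')
  | Sum.inl l, Sum.inr s =>
      Sum.inr (fun n => if h : n < l.length then l.get ⟨n, h⟩ else s (n - l.length))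
  | Sum.inr s, _ => Sum.inr s

instance : Append (Trace σ) := ⟨app⟩

/-- The empty trace ε. -/
def eps : Trace σ := Sum.inl []

/-- A trace is infinite iff it is a stream. -/
def Inf (t : Trace σ) : Prop := t.isRight

/-- Drop the first state of a trace. -/
def drop1 : Trace σ → Trace σ
  | Sum.inl [] => Sum.inl []
  | Sum.inl (_ :: l) => Sum.inl l
  | Sum.inr s => Sum.inr (fun n => s (n + 1))

/-- Drop the first `n` states of a trace. -/
def drop (t : Trace σ) (n : ℕ) : Trace σ := drop1^[n] t

/-- The first state of a trace, if any. -/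
def head? : Trace σ → Option σ
  | Sum.inl [] => none
  | Sum.inl (a :: _) => some a
  | Sum.inr s => some (s 0)

/-- The set of prefixes of a trace. -/
def pre (t : Trace σ) : Set (Trace σ) := {u | ∃ v, t = u ++ v}

/-- The set of prefixes of traces in a set: ↓X. -/
def preS (X : Set (Trace σ)) : Set (Trace σ) := ⋃ t ∈ X, pre t

/-- The set of extensions of a trace: ↑t. -/
def ext (t : Trace σ) : Set (Trace σ) := {u | ∃ v, u = t ++ v}

/-- The definitive prefixes of a set of traces: ↯X. -/
def dp (X : Set (Trace σ)) : Set (Trace σ) := {t | ext t ⊆ preS X}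

/-- A set of traces is definitive iff it equals its own set of definitive prefixes. -/
def Definitive (X : Set (Trace σ)) : Prop := X = dp X

/-- Definitive union ⩁ of a collection of trace sets. -/
def dUnionS (S : Set (Set (Trace σ))) : Set (Trace σ) := dp (⋃₀ S)

/-- Binary / indexed definitive union. -/
def dUnion (X Y : Set (Trace σ)) : Set (Trace σ) := dp (X ∪ Y)

def dUnionI {ι : Sort*} (X : ι → Set (Trace σ)) : Set (Trace σ) := dp (⋃ i, X i)

/-- The prepend operation ▷X. -/
def prepend (X : Set (Trace σ)) : Set (Trace σ) := {t | t.drop 1 ∈ X}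

/-- Σ^ω, the set of infinite traces. -/
def omegaSet (σ : Type) : Set (Trace σ) := {t | t.Inf}

/-- The first state of a trace, with the empty state as default. -/
def st0 {A : Type} (t : Trace (Set A)) : Set A := (t.head?).getD ∅

end Trace

/-- Syntax of LTL formulae over atomic propositions `A`. -/
inductive LTL (A : Type) where
  | top : LTL A
  | atom : A → LTL A
  | neg : LTL A → LTL A
  | and : LTL A → LTL A → LTL A
  | next : LTL A → LTL A
  | until_ : LTL A → LTL A → LTL A

namespace LTL

variable {A : Type}

open Trace

/-- Conventional LTL satisfaction on (infinite) traces. -/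
def Sat : Trace (Set A) → LTL A → Prop
  | t, .top => True
  | t, .atom a => a ∈ t.st0
  | t, .neg φ => ¬ Sat t φ
  | t, .and φ ψ => Sat t φ ∧ Sat t ψ
  | t, .next φ => Sat (t.drop 1) φ
  | t, .until_ φ ψ => ∃ i, Sat (t.drop i) ψ ∧ ∀ j < i, Sat (t.drop j) φ

/-- Answer-indexed family semantics of conventional LTL (sets of infinite traces). -/
def sem : LTL A → Bool → Set (Trace (Set A))
  | .top, true => omegaSet (Set A)
  | .top, false => ∅
  | .atom a, true => {t | t.Inf ∧ a ∈ t.st0}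
  | .atom a, false => {t | t.Inf ∧ a ∉ t.st0}
  | .neg φ, b => sem φ (!b)
  | .and φ ψ, true => sem φ true ∩ sem ψ true
  | .and φ ψ, false => sem φ false ∪ sem ψ false
  | .next φ, b => {t | t.drop 1 ∈ sem φ b}
  | .until_ φ ψ, true => {t | ∃ k, (∀ i < k, t.drop i ∈ sem φ true) ∧ t.drop k ∈ sem ψ true}
  | .until_ φ ψ, false => {t | ∀ k, (∃ i < k, t.drop i ∈ sem φ false) ∨ t.drop k ∈ sem ψ false}

/-- Answer-indexed family semantics of LTL₃ (definitive sets of finite-or-infinite traces). -/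
def sem3 : LTL A → Bool → Set (Trace (Set A))
  | .top, true => Set.univ
  | .top, false => ∅
  | .atom a, true => dp {t | t ≠ eps ∧ a ∈ t.st0}
  | .atom a, false => dp {t | t ≠ eps ∧ a ∉ t.st0}
  | .neg φ, b => sem3 φ (!b)
  | .and φ ψ, true => sem3 φ true ∩ sem3 ψ true
  | .and φ ψ, false => dUnion (sem3 φ false) (sem3 ψ false)
  | .next φ, b => prepend (sem3 φ b)
  | .until_ φ ψ, true =>
      dUnionI (fun k => (fun X => prepend X ∩ sem3 φ true)^[k] (sem3 ψ true))
  | .until_ φ ψ, false =>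
      ⋂ k, (fun X => dUnion (prepend X) (sem3 φ false))^[k] (sem3 ψ false)

end LTL

namespace Trace

variable {σ : Type}

theorem append_def (t v : Trace σ) : t ++ v = app t v := rfl

theorem app_eps (t : Trace σ) : app t eps = t := by
  cases t with
  | inl l => show Sum.inl (l ++ []) = _; simp
  | inr s => rfl

theorem inf_app {t : Trace σ} (h : t.Inf) (v : Trace σ) : app t v = t := by
  cases t with
  | inl l => simp [Inf] at h
  | inr s => rfl

theorem app_inf (a : Trace σ) (s : ℕ → σ) : (app a (Sum.inr s)).Inf := by
  cases a <;> rfl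

theorem app_assoc (a b c : Trace σ) : app (app a b) c = app a (app b c) := by
  cases a with
  | inr s => rfl
  | inl l =>
    cases b with
    | inr s => rfl
    | inl l' =>
      cases c with
      | inl l'' => show Sum.inl _ = Sum.inl _; simp [app]
      | inr s =>
        show (Sum.inr _ : Trace σ) = Sum.inr _
        congr 1
        funext n
        simp only [List.length_append]
        by_cases h1 : n < l.length
        · rw [dif_pos (by omega : n < l.length + l'.length), dif_pos h1]
          simp [List.getElem_append, h1]
        · by_cases h2 : n < l.length + l'.length
          · rw [dif_pos h2, dif_neg h1, dif_pos (by omega : n - l.length < l'.length)]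
            simp [List.getElem_append, h1]
          · rw [dif_neg h2, dif_neg h1, dif_neg (by omega : ¬ n - l.length < l'.length)]
            congr 1
            omega

theorem trace_eq_of_isEmpty [IsEmpty σ] (a b : Trace σ) : a = b := by
  have key : ∀ t : Trace σ, t = eps := by
    intro t
    cases t with
    | inl l =>
      cases l with
      | nil => rfl
      | cons x _ => exact isEmptyElim x
    | inr s => exact isEmptyElim (s 0)
  rw [key a, key b]

end Trace

theorem dp_iInter {σ : Type} {ι : Sort*} (X : ι → Set (Trace σ)) :
    Trace.dp (⋂ i, X i) = ⋂ i, Trace.dp (X i) := by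
  ext t
  simp only [Trace.dp, Set.mem_iInter, Set.mem_setOf_eq]
  constructor
  · intro h i u hu
    obtain ⟨w, hw, hu⟩ := by simpa [Trace.preS] using h hu
    exact Set.mem_biUnion (hw i) hu
  · intro h u hu
    simp only [Trace.preS, Set.mem_iUnion, exists_prop]
    rcases isEmpty_or_nonempty σ with hσ | hσ
    · refine ⟨u, Set.mem_iInter.2 fun i => ?_, ⟨Trace.eps, (Trace.app_eps u).symm⟩⟩
      obtain ⟨x, hx, hux⟩ := by simpa [Trace.preS] using h i hu
      rwa [Trace.trace_eq_of_isEmpty u x]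
    · obtain ⟨a⟩ := hσ
      set w : Trace σ := Trace.app u (Sum.inr (fun _ => a)) with hw_def
      have hwt : w ∈ Trace.ext t := by
        obtain ⟨v, hv⟩ := hu
        exact ⟨Trace.app v (Sum.inr (fun _ => a)), by
          rw [hw_def, hv]; exact Trace.app_assoc t v _⟩
      have hwinf : w.Inf := Trace.app_inf u _
      refine ⟨w, Set.mem_iInter.2 fun i => ?_, ⟨Sum.inr (fun _ => a), rfl⟩⟩
      obtain ⟨v, hx⟩ := by simpa [Trace.preS, Trace.pre] using h i hwt
      rw [Trace.append_def, Trace.inf_app hwinf] at hx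
      exact hx
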